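/- Let a ∈ C_K with |a| > 1, let M ≥ 1 be an integer, and let x ∈ C_K with |x − 1| ≤ |a|^{−M}. Then for every integer 0 ≤ i ≤ M: |φ_a^i(x) − 1| = |a|^i · |x − 1|, and for every real r with 0 < r ≤ |a|^{−M}, φ_a^i(D̄_r(x)) = D̄_{|a|^i r}(φ_a^i(x)). -/

import Mathlib

def phi {K : Type*} [Field K] (p : ℕ) (a : K) (z : K) : K :=
  (1 - a) * z ^ (p + 1) + a * z ^ p

section Aux

variable {K : Type*} [NontriviallyNormedField K] [IsUltrametricDist K]

lemma aux_norm_add_of_lt {x y : K} (h : ‖y‖ < ‖x‖) : ‖x + y‖ = ‖x‖ := by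
  rw [IsUltrametricDist.norm_add_eq_max_of_norm_ne_norm h.ne', max_eq_left h.le]

lemma aux_norm_le_one {u : K} (hu : ‖u - 1‖ < 1) : ‖u‖ ≤ 1 := by
  have : u = (u - 1) + 1 := by ring
  rw [this]
  refine (IsUltrametricDist.norm_add_le_max _ _).trans ?_
  simp [hu.le]

lemma aux_pow_mul_sub_one {u v : K} (hu : ‖u - 1‖ < 1) (hv : ‖v - 1‖ < 1) (i j : ℕ) :
    ‖u ^ i * v ^ j - 1‖ ≤ max ‖u - 1‖ ‖v - 1‖ := by
  have hu1 := aux_norm_le_one hu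
  have hv1 := aux_norm_le_one hv
  have key : ∀ (w : K), ‖w‖ ≤ 1 → ∀ n : ℕ, ‖w ^ n - 1‖ ≤ ‖w - 1‖ := by
    intro w hw n
    rw [← geom_sum_mul w n, norm_mul]
    have h1 : ‖∑ i ∈ Finset.range n, w ^ i‖ ≤ 1 :=
      IsUltrametricDist.norm_sum_le_of_forall_le_of_nonneg zero_le_one
        (fun i _ => by rw [norm_pow]; exact pow_le_one₀ (norm_nonneg w) hw)
    exact mul_le_of_le_one_left (norm_nonneg _) h1
  have hsplit : u ^ i * v ^ j - 1 = u ^ i * (v ^ j - 1) + (u ^ i - 1) := by ring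
  rw [hsplit]
  refine (IsUltrametricDist.norm_add_le_max _ _).trans (max_le ?_ ?_)
  · refine le_trans ?_ (le_max_right ‖u - 1‖ ‖v - 1‖)
    rw [norm_mul]
    calc ‖u ^ i‖ * ‖v ^ j - 1‖ ≤ 1 * ‖v - 1‖ := by
          refine mul_le_mul ?_ (key v hv1 j) (norm_nonneg _) zero_le_one
          rw [norm_pow]; exact pow_le_one₀ (norm_nonneg u) hu1
      _ = ‖v - 1‖ := one_mul _
  · exact le_trans (key u hu1 i) (le_max_left _ _)

lemma aux_geom_sum_sub_card {u v : K} (hu : ‖u - 1‖ < 1) (hv : ‖v - 1‖ < 1) (n : ℕ) :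
    ‖(∑ i ∈ Finset.range n, u ^ i * v ^ (n - 1 - i)) - (n : K)‖ ≤ max ‖u - 1‖ ‖v - 1‖ := by
  have h : (∑ i ∈ Finset.range n, u ^ i * v ^ (n - 1 - i)) - (n : K)
      = ∑ i ∈ Finset.range n, (u ^ i * v ^ (n - 1 - i) - 1) := by
    rw [Finset.sum_sub_distrib, Finset.sum_const, Finset.card_range, nsmul_eq_mul, mul_one]
  rw [h]
  exact IsUltrametricDist.norm_sum_le_of_forall_le_of_nonneg
    (le_max_of_le_left (norm_nonneg _)) (fun i _ => aux_pow_mul_sub_one hu hv i _)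

/-- Exact scaling of `phi` on the open unit ball around `1`. -/
lemma phi_sub_phi (p : ℕ) {a : K} (ha : 1 < ‖a‖) {u v : K}
    (hu : ‖u - 1‖ < 1) (hv : ‖v - 1‖ < 1) :
    ‖phi p a u - phi p a v‖ = ‖a‖ * ‖u - v‖ := by
  have h1K : ‖(1 : K)‖ < ‖a‖ := by rw [norm_one]; exact ha
  set S1 : K := ∑ i ∈ Finset.range (p + 1), u ^ i * v ^ (p + 1 - 1 - i) with hS1
  set S0 : K := ∑ i ∈ Finset.range p, u ^ i * v ^ (p - 1 - i) with hS0
  have h1 := geom_sum₂_mul u v (p + 1)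
  have h0 := geom_sum₂_mul u v p
  have hfact : phi p a u - phi p a v = ((1 - a) * S1 + a * S0) * (u - v) := by
    have e : phi p a u - phi p a v
        = (1 - a) * (u ^ (p + 1) - v ^ (p + 1)) + a * (u ^ p - v ^ p) := by
      simp only [phi]; ring
    rw [e, ← h1, ← h0, hS1, hS0]; ring
  set s : ℝ := max ‖u - 1‖ ‖v - 1‖ with hs
  have hs1 : s < 1 := max_lt hu hv
  have hA0 : (0:ℝ) < ‖a‖ := lt_trans one_pos ha
  have hna : ‖(-a : K)‖ = ‖a‖ := norm_neg a
  have hδ : ‖((1 - a) * S1 + a * S0) - (((p : K) + 1) - a)‖ ≤ ‖a‖ * s := by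
    have e : ((1 - a) * S1 + a * S0) - (((p : K) + 1) - a)
        = (1 - a) * (S1 - ((p + 1 : ℕ) : K)) + a * (S0 - (p : K)) := by
      push_cast; ring
    rw [e]
    have h1a : ‖(1 - a : K)‖ = ‖a‖ := by
      have e2 : (1 - a : K) = -a + 1 := by ring
      rw [e2, aux_norm_add_of_lt (by rw [hna]; exact h1K)]
      exact hna
    refine (IsUltrametricDist.norm_add_le_max _ _).trans (max_le ?_ ?_)
    · rw [norm_mul, h1a]
      exact mul_le_mul_of_nonneg_left (aux_geom_sum_sub_card hu hv (p + 1)) hA0.le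
    · rw [norm_mul]
      exact mul_le_mul_of_nonneg_left (aux_geom_sum_sub_card hu hv p) hA0.le
  have hpa : ‖((p : K) + 1) - a‖ = ‖a‖ := by
    have e : ((p : K) + 1) - a = -a + ((p + 1 : ℕ) : K) := by push_cast; ring
    rw [e, aux_norm_add_of_lt ?_, hna]
    rw [hna]
    exact lt_of_le_of_lt (IsUltrametricDist.norm_natCast_le_one K (p + 1)) ha
  have hh : ‖(1 - a) * S1 + a * S0‖ = ‖a‖ := by
    have e : (1 - a) * S1 + a * S0
        = (((p : K) + 1) - a) + (((1 - a) * S1 + a * S0) - (((p : K) + 1) - a)) := by ring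
    rw [e, aux_norm_add_of_lt, hpa]
    rw [hpa]
    calc ‖((1 - a) * S1 + a * S0) - (((p : K) + 1) - a)‖ ≤ ‖a‖ * s := hδ
      _ < ‖a‖ * 1 := mul_lt_mul_of_pos_left hs1 hA0
      _ = ‖a‖ := mul_one _
  rw [hfact, norm_mul, hh]

omit [IsUltrametricDist K] in
lemma phi_one (p : ℕ) (a : K) : phi p a 1 = 1 := by simp [phi]

/-- Existence of a preimage near 1. -/
lemma phi_root [IsAlgClosed K] (p : ℕ) {a : K} (ha : 1 < ‖a‖) {c : K}
    (hc : ‖c - 1‖ ≤ 1) : ∃ y : K, phi p a y = c ∧ ‖y - 1‖ < 1 := by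
  classical
  have hA0 : (0:ℝ) < ‖a‖ := lt_trans one_pos ha
  have h1K : ‖(1 : K)‖ < ‖a‖ := by rw [norm_one]; exact ha
  have h1a : ‖(1 - a : K)‖ = ‖a‖ := by
    have e2 : (1 - a : K) = -a + 1 := by ring
    rw [e2, aux_norm_add_of_lt (by rw [norm_neg]; exact h1K), norm_neg]
  have h1a0 : (1 - a : K) ≠ 0 := by
    intro h
    apply hA0.ne'
    rw [← h1a, h, norm_zero]
  set q : Polynomial K := Polynomial.C (1 - a) * Polynomial.X ^ (p + 1)
      + (Polynomial.C a * Polynomial.X ^ p - Polynomial.C c) with hq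
  have heval : ∀ y, q.eval y = phi p a y - c := by
    intro y
    simp only [hq, Polynomial.eval_add, Polynomial.eval_sub, Polynomial.eval_mul,
      Polynomial.eval_pow, Polynomial.eval_C, Polynomial.eval_X, phi]
    ring
  have hcoeff : q.coeff (p + 1) = 1 - a := by
    rw [hq, Polynomial.coeff_add, Polynomial.coeff_sub, Polynomial.coeff_C_mul,
      Polynomial.coeff_C_mul, Polynomial.coeff_X_pow, Polynomial.coeff_X_pow,
      Polynomial.coeff_C]
    simp [(Nat.lt_succ_self p).ne]
  have hq0 : q ≠ 0 := fun h => h1a0 (by rw [← hcoeff, h, Polynomial.coeff_zero])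
  have hdlt : (Polynomial.C a * Polynomial.X ^ p - Polynomial.C c).degree
      < (Polynomial.C (1 - a) * Polynomial.X ^ (p + 1)).degree := by
    rw [Polynomial.degree_C_mul_X_pow (p + 1) h1a0]
    refine lt_of_le_of_lt (Polynomial.degree_sub_le _ _) (max_lt ?_ ?_)
    · refine lt_of_le_of_lt (Polynomial.degree_C_mul_X_pow_le _ _) ?_
      exact_mod_cast Nat.lt_succ_self p
    · exact lt_of_le_of_lt Polynomial.degree_C_le (by exact_mod_cast Nat.succ_pos p)
  have hdeg : q.degree = (p + 1 : ℕ) := by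
    rw [hq, Polynomial.degree_add_eq_left_of_degree_lt hdlt,
      Polynomial.degree_C_mul_X_pow (p + 1) h1a0]
  have hnd : q.natDegree = p + 1 := Polynomial.natDegree_eq_of_degree_eq_some hdeg
  have hlc : q.leadingCoeff = 1 - a := by
    rw [Polynomial.leadingCoeff, hnd]; exact hcoeff
  have hsplit : q.Splits := IsAlgClosed.splits q
  have hprod := Polynomial.Splits.eq_prod_roots hsplit
  have hev1 : (1 : K) - c = (1 - a) * ((q.roots.map (fun ρ => 1 - ρ)).prod) := by
    have h := congrArg (Polynomial.eval 1) hprod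
    rw [heval 1, phi_one] at h
    rw [h, Polynomial.eval_mul, Polynomial.eval_C, hlc, Polynomial.eval_multiset_prod,
      Multiset.map_map]
    congr 2
    apply Multiset.map_congr rfl
    intro ρ _
    simp
  have hmprod : ∀ m : Multiset K, ‖m.prod‖ = (m.map (fun z => ‖z‖)).prod := by
    intro m
    induction m using Multiset.induction with
    | empty => simp
    | cons b s ih => simp [ih]
  have hnorm : (q.roots.map (fun ρ => ‖(1:K) - ρ‖)).prod = ‖(1:K) - c‖ / ‖a‖ := by
    have h := congrArg (fun z : K => ‖z‖) hev1
    simp only [norm_mul, h1a] at h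
    rw [hmprod, Multiset.map_map] at h
    rw [show ((fun z : K => ‖z‖) ∘ fun ρ : K => 1 - ρ) = fun ρ : K => ‖(1:K) - ρ‖ from rfl] at h
    field_simp [h]
    rw [h, mul_comm]
  have hlt : (q.roots.map (fun ρ => ‖(1:K) - ρ‖)).prod < 1 := by
    rw [hnorm, div_lt_one hA0, norm_sub_rev]
    exact lt_of_le_of_lt hc ha
  have hex : ∃ ρ ∈ q.roots, ‖(1:K) - ρ‖ < 1 := by
    by_contra h
    push_neg at h
    refine absurd hlt (not_lt.mpr (Multiset.one_le_prod ?_))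
    intro xx hxx
    obtain ⟨ρ, hρ, rfl⟩ := Multiset.mem_map.mp hxx
    exact h ρ hρ
  obtain ⟨ρ, hρmem, hρ⟩ := hex
  refine ⟨ρ, ?_, by rwa [norm_sub_rev]⟩
  have h := Polynomial.isRoot_of_mem_roots hρmem
  rw [Polynomial.IsRoot, heval ρ] at h
  exact sub_eq_zero.mp h

/-- Single-step disk image. -/
lemma phi_image [IsAlgClosed K] (p : ℕ) {a : K} (ha : 1 < ‖a‖) {x' : K} {r' : ℝ}
    (hx' : ‖x' - 1‖ ≤ ‖a‖⁻¹) (hr : r' ≤ ‖a‖⁻¹) :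
    phi p a '' Metric.closedBall x' r' = Metric.closedBall (phi p a x') (‖a‖ * r') := by
  have hA0 : (0:ℝ) < ‖a‖ := lt_trans one_pos ha
  have hinv : ‖a‖⁻¹ < 1 := inv_lt_one_of_one_lt₀ ha
  have hx'1 : ‖x' - 1‖ < 1 := lt_of_le_of_lt hx' hinv
  have h11 : ‖(1:K) - 1‖ < 1 := by simp
  ext c
  simp only [Set.mem_image, Metric.mem_closedBall, dist_eq_norm]
  constructor
  · rintro ⟨y, hy, rfl⟩
    have hy1 : ‖y - 1‖ < 1 := by
      have e : y - 1 = (y - x') + (x' - 1) := by ring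
      rw [e]
      refine lt_of_le_of_lt (IsUltrametricDist.norm_add_le_max _ _) ?_
      exact max_lt (lt_of_le_of_lt (hy.trans hr) hinv) hx'1
    rw [phi_sub_phi p ha hy1 hx'1]
    exact mul_le_mul_of_nonneg_left hy hA0.le
  · intro hc
    have hAr : ‖a‖ * r' ≤ 1 := by
      calc ‖a‖ * r' ≤ ‖a‖ * ‖a‖⁻¹ := mul_le_mul_of_nonneg_left hr hA0.le
        _ = 1 := mul_inv_cancel₀ hA0.ne'
    have hc1 : ‖c - 1‖ ≤ 1 := by
      have e : c - 1 = (c - phi p a x') + (phi p a x' - 1) := by ring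
      rw [e]
      refine (IsUltrametricDist.norm_add_le_max _ _).trans (max_le (hc.trans hAr) ?_)
      have h := phi_sub_phi p ha hx'1 h11
      rw [phi_one] at h
      rw [h]
      calc ‖a‖ * ‖x' - 1‖ ≤ ‖a‖ * ‖a‖⁻¹ := mul_le_mul_of_nonneg_left hx' hA0.le
        _ = 1 := mul_inv_cancel₀ hA0.ne'
    obtain ⟨y, hyc, hy1⟩ := phi_root p ha hc1
    refine ⟨y, ?_, hyc⟩
    have h := phi_sub_phi p ha hy1 hx'1
    rw [hyc] at h
    rw [show ‖y - x'‖ = ‖c - phi p a x'‖ / ‖a‖ by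
      rw [h, mul_comm, mul_div_assoc, div_self hA0.ne', mul_one]]
    rw [div_le_iff₀ hA0, mul_comm]
    exact hc

end Aux

/-- Lemma on the behavior of iterates of `φ_a` near the repelling fixed point `1`:
for `|x - 1| ≤ |a|^{-M}` and `0 ≤ i ≤ M`, `|φ_a^i(x) - 1| = |a|^i·|x-1|`, and
`φ_a^i(D̄_r(x)) = D̄_{|a|^i r}(φ_a^i(x))` for `0 < r ≤ |a|^{-M}`. -/
theorem phi_iterate_repelling_disk
    {K : Type*} [NontriviallyNormedField K] [IsUltrametricDist K]
    [CompleteSpace K] [IsAlgClosed K]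
    (p : ℕ) (hp : p.Prime) (hpK : ‖(p : K)‖ < 1)
    (a : K) (ha : 1 < ‖a‖) (M : ℕ) (hM : 1 ≤ M) (x : K)
    (hx : ‖x - 1‖ ≤ ‖a‖ ^ (-(M : ℤ))) :
    ∀ i ≤ M,
      ‖(phi p a)^[i] x - 1‖ = ‖a‖ ^ i * ‖x - 1‖ ∧
      ∀ r : ℝ, 0 < r → r ≤ ‖a‖ ^ (-(M : ℤ)) →
        (phi p a)^[i] '' Metric.closedBall x r =
          Metric.closedBall ((phi p a)^[i] x) (‖a‖ ^ i * r) := by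
  have hA0 : (0:ℝ) < ‖a‖ := lt_trans one_pos ha
  have hbound : ∀ n : ℕ, n < M → ‖a‖ ^ n * ‖a‖ ^ (-(M : ℤ)) ≤ ‖a‖⁻¹ := by
    intro n hn
    rw [← zpow_natCast ‖a‖ n, ← zpow_add₀ hA0.ne']
    calc ‖a‖ ^ ((n : ℤ) + -(M : ℤ)) ≤ ‖a‖ ^ (-1 : ℤ) := by
          apply zpow_le_zpow_right₀ ha.le
          omega
      _ = ‖a‖⁻¹ := zpow_neg_one ‖a‖
  intro i
  induction i with
  | zero =>
    intro _
    refine ⟨by simp, ?_⟩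
    intro r _ _
    simp
  | succ n ih =>
    intro hn
    obtain ⟨h1, h2⟩ := ih (by omega)
    have hxb : ‖(phi p a)^[n] x - 1‖ ≤ ‖a‖⁻¹ := by
      rw [h1]
      calc ‖a‖ ^ n * ‖x - 1‖ ≤ ‖a‖ ^ n * ‖a‖ ^ (-(M : ℤ)) :=
            mul_le_mul_of_nonneg_left hx (pow_nonneg hA0.le n)
        _ ≤ ‖a‖⁻¹ := hbound n (by omega)
    have hinv : ‖a‖⁻¹ < 1 := inv_lt_one_of_one_lt₀ ha
    have hx1 : ‖(phi p a)^[n] x - 1‖ < 1 := lt_of_le_of_lt hxb hinv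
    constructor
    · rw [Function.iterate_succ_apply']
      have h := phi_sub_phi p ha hx1 (by simp : ‖(1:K) - 1‖ < 1)
      rw [phi_one] at h
      rw [h, h1]
      ring
    · intro r hr0 hrM
      have hrb : ‖a‖ ^ n * r ≤ ‖a‖⁻¹ := by
        calc ‖a‖ ^ n * r ≤ ‖a‖ ^ n * ‖a‖ ^ (-(M : ℤ)) :=
              mul_le_mul_of_nonneg_left hrM (pow_nonneg hA0.le n)
          _ ≤ ‖a‖⁻¹ := hbound n (by omega)
      rw [Function.iterate_succ', Set.image_comp, h2 r hr0 hrM,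
        phi_image p ha hxb hrb]
      simp only [Function.comp_apply]
      rw [← Function.iterate_succ_apply' (phi p a) n x]
      congr 1
      ring
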